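/- Let λ, μ be closed Lagrangian subspaces forming a Fredholm pair and set p_λ(μ) = P(μ^⊥) + P(λ^⊥), where P denotes orthogonal projection. Then p_λ(μ) is a nonnegative selfadjoint Fredholm operator on H, Ker(p_λ(μ)) = λ∩μ, and Coker(p_λ(μ)) ≅ H/(λ^⊥ + μ^⊥) ≅ λ/(λ ∩ (λ^⊥ + μ^⊥)). -/

import Mathlib

set_option linter.unusedSectionVars false
set_option maxHeartbeats 1000000
set_option synthInstance.maxHeartbeats 1000000


open Module RealInnerProductSpace

variable {H : Type*} [NormedAddCommGroup H] [InnerProductSpace ℝ H] [CompleteSpace H]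

/-- A closed Lagrangian subspace of the real symplectic Hilbert space `H` with symplectic
form `ω(x,y) = ⟪J x, y⟫`: a closed subspace which equals its own `ω`-annihilator. -/
def IsLagrangian (J : H →L[ℝ] H) (lam : Submodule ℝ H) : Prop :=
  IsClosed (lam : Set H) ∧ ∀ x : H, x ∈ lam ↔ ∀ y ∈ lam, ⟪J x, y⟫ = 0

/-- The pair `(lam, mu)` is a Fredholm pair of subspaces. -/
def IsFredholmPair (lam mu : Submodule ℝ H) : Prop :=
  FiniteDimensional ℝ ↥(lam ⊓ mu) ∧ IsClosed ((lam ⊔ mu : Submodule ℝ H) : Set H) ∧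
    FiniteDimensional ℝ (H ⧸ (lam ⊔ mu))

/-- A bounded real-linear operator is Fredholm. -/
def IsFredholmR (T : H →L[ℝ] H) : Prop :=
  FiniteDimensional ℝ (LinearMap.ker (T : H →ₗ[ℝ] H)) ∧ IsClosed (LinearMap.range (T : H →ₗ[ℝ] H) : Set H) ∧
    FiniteDimensional ℝ (H ⧸ LinearMap.range (T : H →ₗ[ℝ] H))

/-- The orthogonal projection onto a closed subspace, as an operator `H → H`. -/
noncomputable def projCLM (lam : Submodule ℝ H) [CompleteSpace lam] : H →L[ℝ] H :=
  lam.subtypeL.comp (lam.orthogonalProjectionOnto)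

/-- The conjugation `τ_λ = 2P(λ) − Id` determined by the real structure `λ`. -/
noncomputable def conjOf (lam : Submodule ℝ H) [CompleteSpace lam] : H →L[ℝ] H :=
  (2 : ℝ) • projCLM lam - 1

lemma projCLM_apply (K : Submodule ℝ H) [CompleteSpace K] (x : H) :
    projCLM K x = (K.orthogonalProjectionOnto x : H) := rfl

lemma projCLM_mem (K : Submodule ℝ H) [CompleteSpace K] (x : H) : projCLM K x ∈ K :=
  (K.orthogonalProjectionOnto x).2

lemma inner_projCLM_self (K : Submodule ℝ H) [CompleteSpace K] (x : H) :
    ⟪projCLM K x, x⟫ = ‖projCLM K x‖ ^ 2 := by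
  have h : x - projCLM K x ∈ Kᗮ := Submodule.sub_starProjection_mem_orthogonal (K := K) x
  have h0 : ⟪projCLM K x, x - projCLM K x⟫ = 0 :=
    (Submodule.mem_orthogonal _ _).1 h _ (projCLM_mem K x)
  have : ⟪projCLM K x, x⟫ = ⟪projCLM K x, projCLM K x⟫
      + ⟪projCLM K x, x - projCLM K x⟫ := by
    rw [← inner_add_right, add_sub_cancel]
  rw [this, h0, real_inner_self_eq_norm_sq]; ring

lemma projCLM_eq_zero_iff (K : Submodule ℝ H) [CompleteSpace K] (x : H) :
    projCLM K x = 0 ↔ x ∈ Kᗮ := by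
  rw [projCLM_apply, Submodule.coe_eq_zero, Submodule.orthogonalProjectionOnto_eq_zero_iff]

lemma projCLM_norm_le (K : Submodule ℝ H) [CompleteSpace K] (x : H) :
    ‖projCLM K x‖ ≤ ‖x‖ := by
  have h := inner_projCLM_self K x
  have h2 := real_inner_le_norm (projCLM K x) x
  nlinarith [norm_nonneg (projCLM K x), norm_nonneg x]

lemma projCLM_orth_apply (K : Submodule ℝ H) [CompleteSpace K] (x : H) :
    projCLM Kᗮ x = x - projCLM K x := Submodule.starProjection_orthogonal_val (K := K) x

lemma ker_proj_add (K L : Submodule ℝ H) [CompleteSpace K] [CompleteSpace L] :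
    LinearMap.ker ((projCLM K + projCLM L : H →L[ℝ] H) : H →ₗ[ℝ] H) = Kᗮ ⊓ Lᗮ := by
  ext x
  simp only [LinearMap.mem_ker, ContinuousLinearMap.coe_coe, ContinuousLinearMap.add_apply,
    Submodule.mem_inf]
  constructor
  · intro h
    have h1 : ⟪projCLM K x + projCLM L x, x⟫ = 0 := by rw [h, inner_zero_left]
    rw [inner_add_left, inner_projCLM_self, inner_projCLM_self] at h1
    have hK : projCLM K x = 0 := by
      have := norm_nonneg (projCLM K x); have := norm_nonneg (projCLM L x)
      have : ‖projCLM K x‖ = 0 := by nlinarith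
      simpa using this
    have hL : projCLM L x = 0 := by
      have := norm_nonneg (projCLM K x); have := norm_nonneg (projCLM L x)
      have : ‖projCLM L x‖ = 0 := by nlinarith
      simpa using this
    exact ⟨(projCLM_eq_zero_iff K x).1 hK, (projCLM_eq_zero_iff L x).1 hL⟩
  · rintro ⟨h1, h2⟩
    rw [(projCLM_eq_zero_iff K x).2 h1, (projCLM_eq_zero_iff L x).2 h2, add_zero]

lemma JJ_apply {J : H →L[ℝ] H} (hJ2 : J ∘L J = -1) (z : H) : J (J z) = -z := by
  have := ContinuousLinearMap.ext_iff.1 hJ2 z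
  simpa using this

lemma lag_orthogonal {J : H →L[ℝ] H} (hJ2 : J ∘L J = -1) {lam : Submodule ℝ H}
    (hlam : IsLagrangian J lam) : lamᗮ = Submodule.map (J : H →ₗ[ℝ] H) lam := by
  ext x
  simp only [Submodule.mem_map, LinearMap.coe_coe, ContinuousLinearMap.coe_coe]
  constructor
  · intro hx
    refine ⟨-J x, ?_, by rw [map_neg, JJ_apply hJ2, neg_neg]⟩
    rw [hlam.2]
    intro y hy
    rw [map_neg, JJ_apply hJ2, neg_neg]
    exact real_inner_comm x y ▸ (Submodule.mem_orthogonal _ _).1 hx y hy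
  · rintro ⟨y, hy, rfl⟩
    rw [Submodule.mem_orthogonal]
    intro u hu
    rw [real_inner_comm]
    exact (hlam.2 y).1 hy u hu

lemma map_J_eq_comap {J : H →L[ℝ] H} (hJ2 : J ∘L J = -1) (S : Submodule ℝ H) :
    Submodule.map (J : H →ₗ[ℝ] H) S
      = Submodule.comap ((-J : H →L[ℝ] H) : H →ₗ[ℝ] H) S := by
  ext x
  simp only [Submodule.mem_map, Submodule.mem_comap, LinearMap.coe_coe,
    ContinuousLinearMap.coe_coe, ContinuousLinearMap.neg_apply]
  constructor
  · rintro ⟨y, hy, rfl⟩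
    rw [JJ_apply hJ2, neg_neg]; exact hy
  · intro hx
    exact ⟨-(J x), hx, by rw [map_neg, JJ_apply hJ2, neg_neg]⟩

lemma exists_sum_bound (lam mu : Submodule ℝ H) [CompleteSpace lam] [CompleteSpace mu]
    (hclosed : IsClosed ((lam ⊔ mu : Submodule ℝ H) : Set H)) :
    ∃ C > 0, ∀ z ∈ lam ⊔ mu, ∃ a ∈ lam, ∃ b ∈ mu,
      a + b = z ∧ ‖a‖ ≤ C * ‖z‖ ∧ ‖b‖ ≤ C * ‖z‖ := by
  haveI : CompleteSpace ↥(lam ⊔ mu) := hclosed.completeSpace_coe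
  let f : (↥lam × ↥mu) →ₗ[ℝ] ↥(lam ⊔ mu) :=
    { toFun := fun p => ⟨(p.1 : H) + (p.2 : H),
        add_mem (Submodule.mem_sup_left p.1.2) (Submodule.mem_sup_right p.2.2)⟩
      map_add' := fun p q => by
        apply Subtype.ext
        simp [add_add_add_comm]
      map_smul' := fun c p => by
        apply Subtype.ext
        simp [smul_add] }
  have hfc : Continuous f := by
    apply Continuous.subtype_mk
    exact ((continuous_subtype_val.comp continuous_fst).add
      (continuous_subtype_val.comp continuous_snd))
  let F : (↥lam × ↥mu) →L[ℝ] ↥(lam ⊔ mu) := ⟨f, hfc⟩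
  have hsurj : Function.Surjective F := by
    rintro ⟨z, hz⟩
    rcases Submodule.mem_sup.1 hz with ⟨a, ha, b, hb, rfl⟩
    exact ⟨(⟨a, ha⟩, ⟨b, hb⟩), rfl⟩
  obtain ⟨C, hC, hCb⟩ := F.exists_preimage_norm_le hsurj
  refine ⟨C, hC, fun z hz => ?_⟩
  obtain ⟨x, hx, hxn⟩ := hCb ⟨z, hz⟩
  refine ⟨x.1, x.1.2, x.2, x.2.2, ?_, ?_, ?_⟩
  · exact congrArg Subtype.val hx
  · exact le_trans (norm_fst_le x) hxn
  · exact le_trans (norm_snd_le x) hxn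

lemma angle_bound (lam mu : Submodule ℝ H) [CompleteSpace lam] [CompleteSpace mu]
    (hclosed : IsClosed ((lam ⊔ mu : Submodule ℝ H) : Set H)) :
    ∃ c > 0, ∀ x ∈ (lam ⊓ mu)ᗮ,
      ‖x‖ ≤ c * (‖projCLM muᗮ x‖ + ‖projCLM lamᗮ x‖) := by
  obtain ⟨C, hC, hCb⟩ := exists_sum_bound lam mu hclosed
  refine ⟨C + 1, by linarith, fun x hx => ?_⟩
  by_cases hx0 : x = 0
  · simp only [hx0, norm_zero]
    positivity
  set u := projCLM lam x with hu
  set v := projCLM mu x with hv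
  have hd1 : projCLM lamᗮ x = x - u := projCLM_orth_apply lam x
  have hd2 : projCLM muᗮ x = x - v := projCLM_orth_apply mu x
  set d1 := ‖projCLM lamᗮ x‖ with hdd1
  set d2 := ‖projCLM muᗮ x‖ with hdd2
  have hz : u - v ∈ lam ⊔ mu :=
    Submodule.sub_mem _ (Submodule.mem_sup_left (projCLM_mem lam x))
      (Submodule.mem_sup_right (projCLM_mem mu x))
  obtain ⟨a, ha, b, hb, hab, hna, hnb⟩ := hCb (u - v) hz
  have hzn : ‖u - v‖ ≤ d2 + d1 := by
    have : u - v = (x - v) - (x - u) := by abel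
    rw [this, ← hd1, ← hd2]
    exact norm_sub_le _ _
  have hw : u - a ∈ lam ⊓ mu := by
    refine Submodule.mem_inf.2 ⟨Submodule.sub_mem _ (projCLM_mem lam x) ha, ?_⟩
    have : u - a = v + b := by
      have h2 : u = a + b + v := by rw [hab]; abel
      rw [sub_eq_iff_eq_add, h2]; abel
    rw [this]; exact Submodule.add_mem _ (projCLM_mem mu x) hb
  have hxw : ⟪x, u - a⟫ = 0 := by
    rw [real_inner_comm]
    exact (Submodule.mem_orthogonal _ _).1 hx _ hw
  have hsplit : ⟪x, x⟫ = ⟪x, x - u⟫ + ⟪x, a⟫ + ⟪x, u - a⟫ := by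
    rw [← inner_add_right, ← inner_add_right]
    congr 1
    abel
  have hxu : ⟪x, x - u⟫ = d1 ^ 2 := by
    rw [← hd1, real_inner_comm, inner_projCLM_self]
  have hcs : ⟪x, a⟫ ≤ ‖x‖ * ‖a‖ := real_inner_le_norm x a
  have hnormsq : ‖x‖ ^ 2 ≤ d1 ^ 2 + ‖x‖ * ‖a‖ := by
    have := real_inner_self_eq_norm_sq x
    rw [hsplit, hxw, hxu] at this
    nlinarith
  have hd1le : d1 ≤ ‖x‖ := projCLM_norm_le lamᗮ x
  have hxpos : 0 < ‖x‖ := norm_pos_iff.2 hx0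
  have hna' : ‖a‖ ≤ C * (d2 + d1) := le_trans hna (by nlinarith)
  have hd1n : 0 ≤ d1 := norm_nonneg _
  have hd2n : 0 ≤ d2 := norm_nonneg _
  nlinarith

lemma range_proj_add (lam mu : Submodule ℝ H) [CompleteSpace lam] [CompleteSpace mu]
    (hfin : FiniteDimensional ℝ ↥(lam ⊓ mu))
    (hclosed : IsClosed ((lam ⊔ mu : Submodule ℝ H) : Set H)) :
    LinearMap.range ((projCLM muᗮ + projCLM lamᗮ : H →L[ℝ] H) : H →ₗ[ℝ] H) = lamᗮ ⊔ muᗮ := by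
  set P : H →L[ℝ] H := projCLM muᗮ + projCLM lamᗮ with hP
  have hker : LinearMap.ker (P : H →ₗ[ℝ] H) = lam ⊓ mu := by
    rw [hP, ker_proj_add, Submodule.orthogonal_orthogonal, Submodule.orthogonal_orthogonal,
      inf_comm]
  -- inner product identity
  have hinner : ∀ y : H, ⟪P y, y⟫ = ‖projCLM muᗮ y‖ ^ 2 + ‖projCLM lamᗮ y‖ ^ 2 := by
    intro y
    rw [hP]
    simp only [ContinuousLinearMap.add_apply]
    rw [inner_add_left, inner_projCLM_self, inner_projCLM_self]
  obtain ⟨c, hc, hcb⟩ := angle_bound lam mu hclosed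
  set U : Submodule ℝ H := (lam ⊓ mu)ᗮ with hU
  set g : ↥U →L[ℝ] H := P.comp U.subtypeL with hg
  -- lower bound for g
  have hbound : ∀ y : ↥U, ‖y‖ ≤ (2 * c ^ 2) * ‖g y‖ := by
    intro y
    have hy := hcb (y : H) y.2
    have h1 := hinner (y : H)
    have hcs : ⟪P (y : H), (y : H)⟫ ≤ ‖P (y : H)‖ * ‖y‖ := real_inner_le_norm _ _
    have hgy : g y = P (y : H) := rfl
    rw [hgy]
    have hn1 : (0:ℝ) ≤ ‖projCLM muᗮ (y:H)‖ := norm_nonneg _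
    have hn2 : (0:ℝ) ≤ ‖projCLM lamᗮ (y:H)‖ := norm_nonneg _
    have hny : (0:ℝ) ≤ ‖(y:H)‖ := norm_nonneg _
    have hnP : (0:ℝ) ≤ ‖P (y:H)‖ := norm_nonneg _
    by_cases h0 : (y : H) = 0
    · have : ‖y‖ = 0 := by simpa using congrArg norm h0
      rw [this]; positivity
    · have hpos : 0 < ‖(y:H)‖ := norm_pos_iff.2 h0
      have hyn : ‖y‖ = ‖(y:H)‖ := rfl
      rw [hyn] at hcs ⊢
      set A := ‖projCLM muᗮ (y:H)‖
      set B := ‖projCLM lamᗮ (y:H)‖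
      set X := ‖(y:H)‖
      set PN := ‖P (y:H)‖
      have e1 : X ^ 2 ≤ c ^ 2 * (A + B) ^ 2 := by nlinarith
      have e2 : (A + B) ^ 2 ≤ 2 * (A ^ 2 + B ^ 2) := by nlinarith [sq_nonneg (A - B)]
      have e3 : A ^ 2 + B ^ 2 ≤ PN * X := by rw [← h1]; exact hcs
      have m1 : c ^ 2 * (A + B) ^ 2 ≤ c ^ 2 * (2 * (A ^ 2 + B ^ 2)) :=
        mul_le_mul_of_nonneg_left e2 (by positivity)
      have m2 : 2 * c ^ 2 * (A ^ 2 + B ^ 2) ≤ 2 * c ^ 2 * (PN * X) :=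
        mul_le_mul_of_nonneg_left e3 (by positivity)
      have e4 : X ^ 2 ≤ 2 * c ^ 2 * (PN * X) := by nlinarith [e1, m1, m2]
      nlinarith [e4, hpos]
  have hK : ((2 * c ^ 2 : ℝ).toNNReal : ℝ) = 2 * c ^ 2 :=
    Real.coe_toNNReal _ (by positivity)
  have hanti : AntilipschitzWith (2 * c ^ 2 : ℝ).toNNReal g :=
    g.antilipschitz_of_bound (by intro x; rw [hK]; exact hbound x)
  have hgrange : IsClosed (Set.range g) := hanti.isClosed_range g.uniformContinuous
  haveI : CompleteSpace ↥(lam ⊓ mu) := FiniteDimensional.complete ℝ _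
  have hrs : (LinearMap.range (P : H →ₗ[ℝ] H) : Set H) = Set.range g := by
    ext y
    constructor
    · rintro ⟨x, rfl⟩
      refine ⟨⟨x - projCLM (lam ⊓ mu) x, Submodule.sub_starProjection_mem_orthogonal x⟩, ?_⟩
      have hk : projCLM (lam ⊓ mu) x ∈ LinearMap.ker (P : H →ₗ[ℝ] H) := by
        rw [hker]; exact projCLM_mem _ x
      have : P (x - projCLM (lam ⊓ mu) x) = P x := by
        rw [map_sub, show P (projCLM (lam ⊓ mu) x) = 0 from LinearMap.mem_ker.1 hk, sub_zero]
      simpa [hg] using this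
    · rintro ⟨u, rfl⟩
      exact ⟨(u : H), rfl⟩
  have hPclosed : IsClosed (LinearMap.range (P : H →ₗ[ℝ] H) : Set H) := hrs ▸ hgrange
  -- now show range P = lamᗮ ⊔ muᗮ
  apply le_antisymm
  · rintro _ ⟨x, rfl⟩
    exact Submodule.add_mem _ (Submodule.mem_sup_right (projCLM_mem _ x))
      (Submodule.mem_sup_left (projCLM_mem _ x))
  · intro y hy
    haveI : CompleteSpace ↥(LinearMap.range (P : H →ₗ[ℝ] H)) := hPclosed.completeSpace_coe
    set R : Submodule ℝ H := LinearMap.range (P : H →ₗ[ℝ] H) with hR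
    set s : H := y - projCLM R y with hs
    have hsR : s ∈ Rᗮ := Submodule.sub_starProjection_mem_orthogonal (K := R) y
    have hPs : ⟪P s, s⟫ = 0 :=
      (Submodule.mem_orthogonal _ _).1 hsR _ (LinearMap.mem_range_self (P : H →ₗ[ℝ] H) s)
    rw [hinner s] at hPs
    have h1 : projCLM muᗮ s = 0 := by
      have := norm_nonneg (projCLM muᗮ s); have := norm_nonneg (projCLM lamᗮ s)
      have h : ‖projCLM muᗮ s‖ = 0 := by nlinarith
      simpa using h
    have h2 : projCLM lamᗮ s = 0 := by
      have := norm_nonneg (projCLM muᗮ s); have := norm_nonneg (projCLM lamᗮ s)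
      have h : ‖projCLM lamᗮ s‖ = 0 := by nlinarith
      simpa using h
    have hsmem : s ∈ lam ⊓ mu := by
      refine Submodule.mem_inf.2 ⟨?_, ?_⟩
      · have := (projCLM_eq_zero_iff lamᗮ s).1 h2
        rwa [Submodule.orthogonal_orthogonal] at this
      · have := (projCLM_eq_zero_iff muᗮ s).1 h1
        rwa [Submodule.orthogonal_orthogonal] at this
    have hRleV : R ≤ lamᗮ ⊔ muᗮ := by
      rintro _ ⟨x, rfl⟩
      exact Submodule.add_mem _ (Submodule.mem_sup_right (projCLM_mem _ x))
        (Submodule.mem_sup_left (projCLM_mem _ x))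
    have hVleU : lamᗮ ⊔ muᗮ ≤ (lam ⊓ mu)ᗮ :=
      sup_le (Submodule.orthogonal_le inf_le_left) (Submodule.orthogonal_le inf_le_right)
    have hsV : s ∈ (lam ⊓ mu)ᗮ :=
      hVleU (Submodule.sub_mem _ hy (hRleV (projCLM_mem R y)))
    have hs0 : s = 0 := by
      have : ⟪s, s⟫ = 0 := (Submodule.mem_orthogonal _ _).1 hsV s hsmem
      exact inner_self_eq_zero.1 this
    have hyr : y = projCLM R y := by
      have h0 : y - projCLM R y = 0 := hs ▸ hs0
      exact (sub_eq_zero.1 h0)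
    rw [hyr]
    exact projCLM_mem R y

/-- For closed Lagrangian subspaces `λ, μ` forming a Fredholm pair, the operator
`p_λ(μ) = P(μ^⊥) + P(λ^⊥)` is a nonnegative selfadjoint Fredholm operator on `H`, with
`Ker(p_λ(μ)) = λ∩μ` and `Coker(p_λ(μ)) ≅ H/(λ^⊥ + μ^⊥) ≅ λ/(λ ∩ (λ^⊥ + μ^⊥))`. -/
theorem p_lambda_positive_fredholm
    (J : H →L[ℝ] H) (hJ2 : J ∘L J = -1)
    (hJorth : ∀ x y : H, ⟪J x, J y⟫ = ⟪x, y⟫)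
    (lam mu : Submodule ℝ H) (hlam : IsLagrangian J lam) (hmu : IsLagrangian J mu)
    [CompleteSpace lam] [CompleteSpace mu]
    (hpair : IsFredholmPair lam mu) :
    IsSelfAdjoint (projCLM muᗮ + projCLM lamᗮ) ∧
      (∀ x : H, 0 ≤ ⟪(projCLM muᗮ + projCLM lamᗮ) x, x⟫) ∧
      IsFredholmR (projCLM muᗮ + projCLM lamᗮ) ∧
      LinearMap.ker ((projCLM muᗮ + projCLM lamᗮ : H →L[ℝ] H) : H →ₗ[ℝ] H) = lam ⊓ mu ∧
      Nonempty ((H ⧸ LinearMap.range ((projCLM muᗮ + projCLM lamᗮ : H →L[ℝ] H) : H →ₗ[ℝ] H)) ≃ₗ[ℝ]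
        H ⧸ (lamᗮ ⊔ muᗮ)) ∧
      Nonempty ((H ⧸ (lamᗮ ⊔ muᗮ)) ≃ₗ[ℝ]
        lam ⧸ ((lamᗮ ⊔ muᗮ).comap lam.subtype)) := by
  set P : H →L[ℝ] H := projCLM muᗮ + projCLM lamᗮ with hP
  have hker : LinearMap.ker (P : H →ₗ[ℝ] H) = lam ⊓ mu := by
    rw [hP, ker_proj_add, Submodule.orthogonal_orthogonal, Submodule.orthogonal_orthogonal,
      inf_comm]
  have hrange : LinearMap.range (P : H →ₗ[ℝ] H) = lamᗮ ⊔ muᗮ := range_proj_add lam mu hpair.1 hpair.2.1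
  have hVmap : lamᗮ ⊔ muᗮ = Submodule.map (J : H →ₗ[ℝ] H) (lam ⊔ mu) := by
    rw [Submodule.map_sup, ← lag_orthogonal hJ2 hlam, ← lag_orthogonal hJ2 hmu]
  have hVclosed : IsClosed ((lamᗮ ⊔ muᗮ : Submodule ℝ H) : Set H) := by
    rw [hVmap, map_J_eq_comap hJ2]
    exact hpair.2.1.preimage (-J).continuous
  -- the linear equivalence induced by J
  have hJJ' : ((J : H →ₗ[ℝ] H) ∘ₗ (-(J : H →ₗ[ℝ] H))) = LinearMap.id := by
    ext z; simp [JJ_apply hJ2]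
  have hJJ'' : ((-(J : H →ₗ[ℝ] H)) ∘ₗ (J : H →ₗ[ℝ] H)) = LinearMap.id := by
    ext z; simp [JJ_apply hJ2]
  set e : H ≃ₗ[ℝ] H := LinearEquiv.ofLinear (J : H →ₗ[ℝ] H) (-(J : H →ₗ[ℝ] H)) hJJ' hJJ''
    with he
  have hmape : Submodule.map (e : H →ₗ[ℝ] H) (lam ⊔ mu) = lamᗮ ⊔ muᗮ := by
    rw [hVmap]
    ext x
    simp only [Submodule.mem_map, he, LinearEquiv.coe_coe, LinearEquiv.ofLinear_apply]
  haveI hfd : FiniteDimensional ℝ (H ⧸ (lam ⊔ mu)) := hpair.2.2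
  have e_q : (H ⧸ (lam ⊔ mu)) ≃ₗ[ℝ] (H ⧸ (lamᗮ ⊔ muᗮ)) :=
    Submodule.Quotient.equiv _ _ e hmape
  haveI hfdV : FiniteDimensional ℝ (H ⧸ (lamᗮ ⊔ muᗮ)) := Module.Finite.equiv e_q
  have eR : (H ⧸ LinearMap.range (P : H →ₗ[ℝ] H)) ≃ₗ[ℝ] (H ⧸ (lamᗮ ⊔ muᗮ)) :=
    Submodule.quotEquivOfEq _ _ hrange
  haveI hfdR : FiniteDimensional ℝ (H ⧸ LinearMap.range (P : H →ₗ[ℝ] H)) := Module.Finite.equiv eR.symm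
  haveI hfdK : FiniteDimensional ℝ (LinearMap.ker (P : H →ₗ[ℝ] H)) := by rw [hker]; exact hpair.1
  -- last isomorphism
  have hVle : lamᗮ ≤ lamᗮ ⊔ muᗮ := le_sup_left
  have hsup : lam ⊔ (lamᗮ ⊔ muᗮ) = ⊤ := by
    refine le_antisymm le_top ?_
    rw [← Submodule.sup_orthogonal_of_hasOrthogonalProjection (K := lam)]
    exact sup_le_sup_left hVle lam
  set V : Submodule ℝ H := lamᗮ ⊔ muᗮ with hV
  set f : ↥lam →ₗ[ℝ] H ⧸ V := V.mkQ.comp lam.subtype with hf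
  have hfker : LinearMap.ker f = V.comap lam.subtype := by
    rw [hf, LinearMap.ker_comp, Submodule.ker_mkQ]
  have hfsurj : Function.Surjective f := by
    intro yq
    obtain ⟨x, rfl⟩ := Submodule.Quotient.mk_surjective V yq
    have hx : x ∈ lam ⊔ V := by rw [hsup]; exact Submodule.mem_top
    obtain ⟨a, ha, v, hv, rfl⟩ := Submodule.mem_sup.1 hx
    refine ⟨⟨a, ha⟩, ?_⟩
    show V.mkQ a = Submodule.Quotient.mk (a + v)
    rw [Submodule.mkQ_apply]
    exact (Submodule.Quotient.eq V).2 (by simpa using Submodule.neg_mem V hv)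
  have e2 : (↥lam ⧸ LinearMap.ker f) ≃ₗ[ℝ] (H ⧸ V) :=
    f.quotKerEquivOfSurjective hfsurj
  refine ⟨?_, ?_, ⟨hfdK, ?_, hfdR⟩, hker, ⟨eR⟩, ⟨e2.symm.trans (Submodule.quotEquivOfEq _ _ hfker)⟩⟩
  · exact (isSelfAdjoint_starProjection muᗮ).add (isSelfAdjoint_starProjection lamᗮ)
  · intro x
    have : ⟪P x, x⟫ = ‖projCLM muᗮ x‖ ^ 2 + ‖projCLM lamᗮ x‖ ^ 2 := by
      rw [hP]
      simp only [ContinuousLinearMap.add_apply]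
      rw [inner_add_left, inner_projCLM_self, inner_projCLM_self]
    rw [this]
    positivity
  · rw [hrange]; exact hVclosed
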